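/- arXiv:2007.02156 — 3 statements merged into one kernel-verified Lean document; each statement's English description precedes it below -/
import Mathlib

section
/- Under the assumptions 0 < b < a < 1 and 0 < β < 1, the matrix B_Z of the K-block homogeneous model with one binary covariate is positive semidefinite of rank K+1, its largest nonzero eigenvalue is 2a + 2(K−1)b + Kβ, and its smallest nonzero eigenvalue equals Kβ if β ≤ 2(a−b)/K and equals 2(a−b) if β > 2(a−b)/K. -/
open Matrix

lemma step_aux (K : ℕ) (a b β : ℝ) (BZ : Matrix (Fin K × Fin 2) (Fin K × Fin 2) ℝ)
    (hBZ : ∀ k ℓ : Fin K, ∀ z z' : Fin 2,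
      BZ (k, z) (ℓ, z') = (if k = ℓ then a else b) + (if z = z' then β else 0))
    (v : Fin K × Fin 2 → ℝ) (k : Fin K) (z : Fin 2) :
    (BZ *ᵥ v) (k, z)
      = (a-b) * (∑ z', v (k, z')) + b * (∑ p, v p) + β * (∑ ℓ, v (ℓ, z)) := by
  have h0 : (BZ *ᵥ v) (k,z) = ∑ ℓ, ∑ z', BZ (k,z) (ℓ,z') * v (ℓ,z') := by
    rw [mulVec, dotProduct, Fintype.sum_prod_type]
  have h2 : ∀ ℓ : Fin K, ∀ z' : Fin 2, BZ (k,z) (ℓ,z') * v (ℓ,z')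
      = b * v (ℓ,z') + (if k = ℓ then (a-b) else 0) * v (ℓ,z')
        + (if z = z' then β else 0) * v (ℓ,z') := by
    intro ℓ z'; rw [hBZ]; split_ifs <;> ring
  rw [h0]
  simp_rw [h2, Finset.sum_add_distrib, ite_mul, zero_mul, Finset.sum_ite_eq,
    Finset.mem_univ, if_true, ← Finset.mul_sum]
  have h3 : (∑ x : Fin K, ∑ x1 : Fin 2, if k = x then (a-b) * v (x,x1) else 0)
      = ∑ x1 : Fin 2, (a-b) * v (k, x1) := by
    rw [Finset.sum_comm]; simp
  rw [h3, ← Fintype.sum_prod_type, ← Finset.mul_sum]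
  ring

lemma main_aux (K : ℕ) (a b β : ℝ) (BZ : Matrix (Fin K × Fin 2) (Fin K × Fin 2) ℝ)
    (hBZ : ∀ k ℓ : Fin K, ∀ z z' : Fin 2,
      BZ (k, z) (ℓ, z') = (if k = ℓ then a else b) + (if z = z' then β else 0))
    (μ : ℝ) (v : Fin K × Fin 2 → ℝ) (hv : BZ *ᵥ v = μ • v)
    (h1 : μ ≠ 2*a + 2*((K:ℝ) - 1)*b + (K:ℝ)*β) (h2 : μ ≠ (K:ℝ)*β) (h3 : μ ≠ 2*(a-b)) :
    (∀ k, (∑ z, v (k,z)) = 0) ∧ (∀ z, (∑ ℓ, v (ℓ,z)) = 0) ∧ (∀ p, μ * v p = 0) := by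
  have hpt : ∀ k z, (a-b) * (∑ z', v (k, z')) + b * (∑ p, v p) + β * (∑ ℓ, v (ℓ, z))
      = μ * v (k,z) := by
    intro k z
    have h := congrFun hv (k,z)
    rw [step_aux K a b β BZ hBZ v k z] at h
    simpa using h
  have hsum_s : (∑ k, ∑ z, v (k,z)) = ∑ p, v p := (Fintype.sum_prod_type _).symm
  have e3 : (∑ ℓ, v (ℓ,0)) + (∑ ℓ, v (ℓ,1)) = ∑ p, v p := by
    rw [← Finset.sum_add_distrib, Fintype.sum_prod_type]
    exact Finset.sum_congr rfl fun k _ => (Fin.sum_univ_two (fun y => v (k, y))).symm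
  have hR : ∀ k, 2*((a-b) * (∑ z, v (k,z))) + 2*(b*(∑ p, v p)) + β*(∑ p, v p)
      = μ * (∑ z, v (k,z)) := by
    intro k
    have h0 := hpt k 0
    have h1' := hpt k 1
    have e1 : (∑ z', v (k,z')) = v (k,0) + v (k,1) := Fin.sum_univ_two _
    linear_combination h0 + h1' - β * e3 - μ * e1
  have hC : ∀ z, (a-b)*(∑ p, v p) + (K:ℝ)*(b*(∑ p, v p)) + (K:ℝ)*(β*(∑ ℓ, v (ℓ,z)))
      = μ * (∑ ℓ, v (ℓ,z)) := by
    intro z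
    have h := Finset.sum_congr rfl (fun k (_ : k ∈ Finset.univ) => hpt k z)
    rw [Finset.sum_add_distrib, Finset.sum_add_distrib, ← Finset.mul_sum, hsum_s,
      Finset.sum_const, Finset.sum_const, Finset.card_univ, Fintype.card_fin,
      nsmul_eq_mul, nsmul_eq_mul, ← Finset.mul_sum] at h
    linear_combination h
  have hS : (2*(a-b) + 2*(K:ℝ)*b + (K:ℝ)*β) * (∑ p, v p) = μ * (∑ p, v p) := by
    linear_combination hC 0 + hC 1 - ((K:ℝ)*β - μ) * e3
  have hs0 : (∑ p, v p) = 0 := by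
    rcases mul_eq_zero.mp (show (2*(a-b) + 2*(K:ℝ)*b + (K:ℝ)*β - μ) * (∑ p, v p) = 0
        by linear_combination hS) with h | h
    · exact absurd (by linear_combination -h) h1
    · exact h
  have hRk0 : ∀ k, (∑ z, v (k,z)) = 0 := by
    intro k
    rcases mul_eq_zero.mp (show (2*(a-b) - μ) * (∑ z, v (k,z)) = 0
        by linear_combination hR k - (2*b + β) * hs0) with h | h
    · exact absurd (by linear_combination -h) h3
    · exact h
  have hCz0 : ∀ z, (∑ ℓ, v (ℓ,z)) = 0 := by
    intro z
    rcases mul_eq_zero.mp (show ((K:ℝ)*β - μ) * (∑ ℓ, v (ℓ,z)) = 0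
        by linear_combination hC z - ((a-b) + (K:ℝ)*b) * hs0) with h | h
    · exact absurd (by linear_combination -h) h2
    · exact h
  refine ⟨hRk0, hCz0, ?_⟩
  rintro ⟨k, z⟩
  linear_combination -(hpt k z) + (a-b)*(hRk0 k) + b*hs0 + β*(hCz0 z)

lemma exists_idx_aux {n : Type*} [Fintype n] [DecidableEq n] (A : Matrix n n ℝ)
    (hA : A.IsHermitian) (μ : ℝ) (v : n → ℝ) (hv0 : v ≠ 0) (hv : A *ᵥ v = μ • v) :
    ∃ i, hA.eigenvalues i = μ := by
  by_contra hcon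
  push_neg at hcon
  have hker : (A - μ • 1) *ᵥ v = 0 := by
    rw [sub_mulVec, smul_mulVec, one_mulVec, hv, sub_self]
  have hdet0 : (A - μ • 1).det = 0 := (Matrix.exists_mulVec_eq_zero_iff).mp ⟨v, hv0, hker⟩
  have hUU : (↑(hA.eigenvectorUnitary) : Matrix n n ℝ) * star (↑(hA.eigenvectorUnitary) : Matrix n n ℝ) = 1 :=
    Matrix.mem_unitaryGroup_iff.mp hA.eigenvectorUnitary.2
  have hfac : A - μ • 1 =
      (↑(hA.eigenvectorUnitary) : Matrix n n ℝ) *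
        (Matrix.diagonal (RCLike.ofReal ∘ hA.eigenvalues) - μ • 1) *
        star (↑(hA.eigenvectorUnitary) : Matrix n n ℝ) := by
    rw [Matrix.mul_sub, Matrix.sub_mul]
    conv_lhs => rw [hA.spectral_theorem, Unitary.conjStarAlgAut_apply]
    congr 1
    rw [Matrix.mul_smul, mul_one, Matrix.smul_mul, hUU]
  rw [hfac, det_mul, det_mul] at hdet0
  have hUdet : (↑(hA.eigenvectorUnitary) : Matrix n n ℝ).det *
      (star (↑(hA.eigenvectorUnitary) : Matrix n n ℝ)).det = 1 := by
    rw [← det_mul, hUU, det_one]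
  have hDdet : (Matrix.diagonal (RCLike.ofReal ∘ hA.eigenvalues) - μ • (1 : Matrix n n ℝ)).det
      = 0 := by
    rcases mul_eq_zero.mp (show ((↑(hA.eigenvectorUnitary) : Matrix n n ℝ).det *
        (star (↑(hA.eigenvectorUnitary) : Matrix n n ℝ)).det) *
        (Matrix.diagonal (RCLike.ofReal ∘ hA.eigenvalues) - μ • (1 : Matrix n n ℝ)).det = 0
      from by linear_combination hdet0) with h | h
    · rw [hUdet] at h; exact absurd h one_ne_zero
    · exact h
  rw [Matrix.smul_one_eq_diagonal, Matrix.diagonal_sub, Matrix.det_diagonal] at hDdet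
  obtain ⟨i, -, hi⟩ := Finset.prod_eq_zero_iff.mp hDdet
  exact hcon i (sub_eq_zero.mp (by simpa using hi))

lemma ev1_aux (K : ℕ) (a b β : ℝ) (BZ : Matrix (Fin K × Fin 2) (Fin K × Fin 2) ℝ)
    (hBZ : ∀ k ℓ : Fin K, ∀ z z' : Fin 2,
      BZ (k, z) (ℓ, z') = (if k = ℓ then a else b) + (if z = z' then β else 0)) :
    BZ *ᵥ (fun _ => (1:ℝ)) = (2*a + 2*((K:ℝ)-1)*b + (K:ℝ)*β) • (fun _ => (1:ℝ)) := by
  funext p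
  obtain ⟨k, z⟩ := p
  rw [step_aux K a b β BZ hBZ]
  simp [Finset.sum_const, Finset.card_univ]
  ring

lemma ev2_aux (K : ℕ) (a b β : ℝ) (BZ : Matrix (Fin K × Fin 2) (Fin K × Fin 2) ℝ)
    (hBZ : ∀ k ℓ : Fin K, ∀ z z' : Fin 2,
      BZ (k, z) (ℓ, z') = (if k = ℓ then a else b) + (if z = z' then β else 0)) :
    BZ *ᵥ (fun p => if p.2 = 0 then (1:ℝ) else -1)
      = ((K:ℝ)*β) • (fun p => if p.2 = 0 then (1:ℝ) else -1) := by
  funext p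
  obtain ⟨k, z⟩ := p
  rw [step_aux K a b β BZ hBZ]
  have h1 : (∑ z' : Fin 2, (fun p : Fin K × Fin 2 => if p.2 = 0 then (1:ℝ) else -1) (k, z'))
      = 0 := by
    rw [Fin.sum_univ_two]; norm_num
  have h2 : (∑ q : Fin K × Fin 2, (fun p : Fin K × Fin 2 => if p.2 = 0 then (1:ℝ) else -1) q)
      = 0 := by
    rw [Fintype.sum_prod_type]
    simp [Fin.sum_univ_two]
  have h3 : (∑ ℓ : Fin K, (fun p : Fin K × Fin 2 => if p.2 = 0 then (1:ℝ) else -1) (ℓ, z))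
      = (K:ℝ) * (if z = 0 then (1:ℝ) else -1) := by
    by_cases hz : z = 0 <;> simp [hz, Finset.sum_const, Finset.card_univ, mul_comm]
  rw [h1, h2, h3]
  simp only [Pi.smul_apply, smul_eq_mul]
  ring

lemma ev3_aux (K : ℕ) (hK : 2 ≤ K) (a b β : ℝ) (BZ : Matrix (Fin K × Fin 2) (Fin K × Fin 2) ℝ)
    (hBZ : ∀ k ℓ : Fin K, ∀ z z' : Fin 2,
      BZ (k, z) (ℓ, z') = (if k = ℓ then a else b) + (if z = z' then β else 0)) :
    BZ *ᵥ (fun p => (if p.1 = (⟨0, by omega⟩ : Fin K) then (1:ℝ) else 0)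
        + (if p.1 = (⟨1, by omega⟩ : Fin K) then -1 else 0))
      = (2*(a-b)) • (fun p => (if p.1 = (⟨0, by omega⟩ : Fin K) then (1:ℝ) else 0)
        + (if p.1 = (⟨1, by omega⟩ : Fin K) then -1 else 0)) := by
  set c : Fin K → ℝ := fun k => (if k = (⟨0, by omega⟩ : Fin K) then (1:ℝ) else 0)
        + (if k = (⟨1, by omega⟩ : Fin K) then -1 else 0) with hc
  have hsumc : (∑ ℓ : Fin K, c ℓ) = 0 := by
    rw [hc]
    rw [Finset.sum_add_distrib]
    simp [Finset.sum_ite_eq']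
  funext p
  obtain ⟨k, z⟩ := p
  rw [step_aux K a b β BZ hBZ]
  have h1 : (∑ z' : Fin 2, (fun q : Fin K × Fin 2 => c q.1) (k, z')) = 2 * c k := by
    rw [Fin.sum_univ_two]; ring
  have h2 : (∑ q : Fin K × Fin 2, (fun q : Fin K × Fin 2 => c q.1) q) = 0 := by
    rw [Fintype.sum_prod_type]
    simp only [Finset.sum_const, Finset.card_univ, Fintype.card_fin]
    rw [← Finset.smul_sum, hsumc, smul_zero]
  have h3 : (∑ ℓ : Fin K, (fun q : Fin K × Fin 2 => c q.1) (ℓ, z)) = 0 := hsumc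
  rw [h1, h2, h3]
  simp only [Pi.smul_apply, smul_eq_mul]
  ring

noncomputable def sumL (K : ℕ) : (Fin K → ℝ) →ₗ[ℝ] ℝ where
  toFun c := ∑ k, c k
  map_add' x y := by simp [Finset.sum_add_distrib]
  map_smul' m x := by simp [Finset.mul_sum]

noncomputable def embL (K : ℕ) : (Fin K → ℝ) →ₗ[ℝ] (Fin K × Fin 2 → ℝ) where
  toFun c := fun p => if p.2 = 0 then c p.1 else -c p.1
  map_add' x y := by funext p; by_cases h : p.2 = 0 <;> simp [h] <;> ring
  map_smul' m x := by funext p; by_cases h : p.2 = 0 <;> simp [h]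

lemma ker_aux (K : ℕ) (hK : 2 ≤ K) (a b β : ℝ)
    (hb : 0 < b) (hba : b < a) (hβ : 0 < β)
    (BZ : Matrix (Fin K × Fin 2) (Fin K × Fin 2) ℝ)
    (hBZ : ∀ k ℓ : Fin K, ∀ z z' : Fin 2,
      BZ (k, z) (ℓ, z') = (if k = ℓ then a else b) + (if z = z' then β else 0)) :
    LinearMap.ker BZ.mulVecLin = Submodule.map (embL K) (LinearMap.ker (sumL K)) := by
  have hK2 : (2:ℝ) ≤ (K:ℝ) := by exact_mod_cast hK
  ext v
  simp only [LinearMap.mem_ker, Matrix.mulVecLin_apply, Submodule.mem_map]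
  constructor
  · intro hv
    have hv' : BZ *ᵥ v = (0:ℝ) • v := by rw [zero_smul]; exact hv
    have h1 : (0:ℝ) ≠ 2*a + 2*((K:ℝ) - 1)*b + (K:ℝ)*β := by nlinarith
    have h2 : (0:ℝ) ≠ (K:ℝ)*β := by nlinarith
    have h3 : (0:ℝ) ≠ 2*(a-b) := by nlinarith
    obtain ⟨hR, hC, -⟩ := main_aux K a b β BZ hBZ 0 v hv' h1 h2 h3
    refine ⟨fun k => v (k, 0), ?_, ?_⟩
    · simpa [sumL] using hC 0
    · funext p
      obtain ⟨k, z⟩ := p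
      have hk := hR k
      rw [Fin.sum_univ_two] at hk
      fin_cases z
      · simp [embL]
      · simp only [embL, LinearMap.coe_mk, AddHom.coe_mk]
        norm_num
        linarith
  · rintro ⟨c, hc, rfl⟩
    have hc' : (∑ k, c k) = 0 := hc
    funext p
    obtain ⟨k, z⟩ := p
    rw [step_aux K a b β BZ hBZ]
    have e1 : (∑ z' : Fin 2, (embL K c) (k, z')) = 0 := by
      rw [Fin.sum_univ_two]
      simp [embL]
    have e2 : (∑ q : Fin K × Fin 2, (embL K c) q) = 0 := by
      rw [Fintype.sum_prod_type]
      have : ∀ ℓ : Fin K, (∑ z' : Fin 2, (embL K c) (ℓ, z')) = 0 := by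
        intro ℓ; rw [Fin.sum_univ_two]; simp [embL]
      simp [this]
    have e3 : (∑ ℓ : Fin K, (embL K c) (ℓ, z)) = 0 := by
      by_cases hz : z = 0 <;> simp [embL, hz, hc']
    rw [e1, e2, e3]
    simp

lemma rank_aux (K : ℕ) (hK : 2 ≤ K) (a b β : ℝ)
    (hb : 0 < b) (hba : b < a) (hβ : 0 < β)
    (BZ : Matrix (Fin K × Fin 2) (Fin K × Fin 2) ℝ)
    (hBZ : ∀ k ℓ : Fin K, ∀ z z' : Fin 2,
      BZ (k, z) (ℓ, z') = (if k = ℓ then a else b) + (if z = z' then β else 0)) :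
    BZ.rank = K + 1 := by
  have hinj : Function.Injective (embL K) := by
    intro x y h
    funext k
    have := congrFun h (k, 0)
    simpa [embL] using this
  have hfin1 : Module.finrank ℝ (LinearMap.ker (BZ.mulVecLin))
      = Module.finrank ℝ (LinearMap.ker (sumL K)) := by
    rw [ker_aux K hK a b β hb hba hβ BZ hBZ]
    exact ((Submodule.equivMapOfInjective _ hinj _).symm).finrank_eq
  have hsurj : LinearMap.range (sumL K) = ⊤ := by
    rw [LinearMap.range_eq_top]
    intro x
    refine ⟨Pi.single ⟨0, by omega⟩ x, ?_⟩
    simp [sumL, Finset.sum_pi_single']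
  have h1 := LinearMap.finrank_range_add_finrank_ker (sumL K)
  have h2 := LinearMap.finrank_range_add_finrank_ker (BZ.mulVecLin)
  rw [hsurj, finrank_top] at h1
  have hd1 : Module.finrank ℝ (Fin K → ℝ) = K := by simp
  have hd2 : Module.finrank ℝ (Fin K × Fin 2 → ℝ) = 2 * K := by
    simp [Module.finrank_fintype_fun_eq_card]
    ring
  have hd3 : Module.finrank ℝ ℝ = 1 := Module.finrank_self ℝ
  have hrk : BZ.rank = Module.finrank ℝ (LinearMap.range BZ.mulVecLin) := rfl
  rw [hd3, hd1] at h1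
  rw [hd2, hfin1] at h2
  omega

theorem stmt_5 (K : ℕ) (hK : 2 ≤ K) (a b β : ℝ)
    (hb : 0 < b) (hba : b < a) (ha : a < 1) (hβ : 0 < β) (hβ1 : β < 1)
    (BZ : Matrix (Fin K × Fin 2) (Fin K × Fin 2) ℝ)
    (hBZ : ∀ k ℓ : Fin K, ∀ z z' : Fin 2,
      BZ (k, z) (ℓ, z') = (if k = ℓ then a else b) + (if z = z' then β else 0))
    (hHerm : BZ.IsHermitian) :
    BZ.PosSemidef ∧ BZ.rank = K + 1 ∧
    (∀ i, hHerm.eigenvalues i ≠ 0 → hHerm.eigenvalues i ≤ 2*a + 2*(K - 1)*b + K*β) ∧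
    (∃ i, hHerm.eigenvalues i = 2*a + 2*(K - 1)*b + K*β) ∧
    ((β ≤ 2*(a - b)/K →
        (∀ i, hHerm.eigenvalues i ≠ 0 → K*β ≤ hHerm.eigenvalues i) ∧
        (∃ i, hHerm.eigenvalues i = K*β)) ∧
      (2*(a - b)/K < β →
        (∀ i, hHerm.eigenvalues i ≠ 0 → 2*(a - b) ≤ hHerm.eigenvalues i) ∧
        (∃ i, hHerm.eigenvalues i = 2*(a - b)))) := by
  have hK2 : (2:ℝ) ≤ (K:ℝ) := by exact_mod_cast hK
  have hKpos : (0:ℝ) < (K:ℝ) := by linarith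
  have hclass : ∀ i, hHerm.eigenvalues i = 0
      ∨ hHerm.eigenvalues i = 2*a + 2*((K:ℝ)-1)*b + (K:ℝ)*β
      ∨ hHerm.eigenvalues i = (K:ℝ)*β
      ∨ hHerm.eigenvalues i = 2*(a-b) := by
    intro i
    by_contra h
    push_neg at h
    obtain ⟨h0, h1, h2, h3⟩ := h
    have hv := hHerm.mulVec_eigenvectorBasis i
    have hvnz : (⇑(hHerm.eigenvectorBasis i) : Fin K × Fin 2 → ℝ) ≠ 0 :=
      fun h => hHerm.eigenvectorBasis.orthonormal.ne_zero i (WithLp.ofLp_injective 2 (by simpa using h))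
    obtain ⟨-, -, hz⟩ := main_aux K a b β BZ hBZ _ _ hv h1 h2 h3
    apply hvnz
    funext p
    rcases mul_eq_zero.mp (hz p) with h | h
    · exact absurd h h0
    · exact h
  have hone_ne : (fun _ : Fin K × Fin 2 => (1:ℝ)) ≠ 0 := by
    intro h
    have := congrFun h (⟨0, by omega⟩, 0)
    norm_num at this
  have hv2_ne : (fun p : Fin K × Fin 2 => if p.2 = 0 then (1:ℝ) else -1) ≠ 0 := by
    intro h
    have := congrFun h (⟨0, by omega⟩, 0)
    norm_num at this
  have hv3_ne : (fun p : Fin K × Fin 2 => (if p.1 = (⟨0, by omega⟩ : Fin K) then (1:ℝ) else 0)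
      + (if p.1 = (⟨1, by omega⟩ : Fin K) then -1 else 0)) ≠ 0 := by
    intro h
    have := congrFun h (⟨0, by omega⟩, 0)
    simp [Fin.mk.injEq] at this
  refine ⟨?_, rank_aux K hK a b β hb hba hβ BZ hBZ, ?_, ?_, ?_, ?_⟩
  · refine hHerm.posSemidef_iff_eigenvalues_nonneg.mpr (fun i => (?_ : (0:ℝ) ≤ _))
    rcases hclass i with h | h | h | h <;> rw [h] <;> nlinarith
  · intro i hi
    rcases hclass i with h | h | h | h
    · exact absurd h hi
    all_goals rw [h]
    all_goals nlinarith
  · exact exists_idx_aux BZ hHerm _ _ hone_ne (ev1_aux K a b β BZ hBZ)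
  · intro hcase
    have hKb : (K:ℝ)*β ≤ 2*(a-b) := by
      have := (le_div_iff₀ hKpos).mp hcase
      linarith
    constructor
    · intro i hi
      rcases hclass i with h | h | h | h
      · exact absurd h hi
      all_goals rw [h]
      all_goals nlinarith
    · exact exists_idx_aux BZ hHerm _ _ hv2_ne (ev2_aux K a b β BZ hBZ)
  · intro hcase
    have hKb : 2*(a-b) < (K:ℝ)*β := by
      have := (div_lt_iff₀ hKpos).mp hcase
      linarith
    constructor
    · intro i hi
      rcases hclass i with h | h | h | h
      · exact absurd h hi
      all_goals rw [h]
      all_goals nlinarith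
    · exact exists_idx_aux BZ hHerm _ _ hv3_ne (ev3_aux K hK a b β BZ hBZ)
end

section
/- For the 4×4 matrix B_Z of the two-block rank one model with binary covariate (entries built from p², q², pq plus β on covariate-matching pairs), B_Z = ν_Z ν_Z^⊤ where ν_Z ∈ ℝ^{4×3} has rows (√(p²+β), 0, 0), (p²/√(p²+β), √(β(2p²+β)/(p²+β)), 0), ((pq+β)/√(p²+β), √(βp²(q−p)²/((p²+β)(2p²+β))), √(β(q−p)²/(2p²+β))), and (pq/√(p²+β), √(β(p²+pq+β)²/((p²+β)(2p²+β))), √(β(q−p)²/(2p²+β))). -/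
open Matrix

set_option maxHeartbeats 2000000

theorem stmt_6 (p q β : ℝ) (hp : 0 < p) (hpq : p < q) (hq : q < 1) (hβ : 0 < β) (hβ1 : β < 1)
    (hr1 : p^2 + β ≤ 1) (hr2 : q^2 + β ≤ 1) (hr3 : p*q + β ≤ 1)
    (BZ : Matrix (Fin 4) (Fin 4) ℝ)
    (hBZ : BZ = !![p^2+β, p^2, p*q+β, p*q;
                   p^2, p^2+β, p*q, p*q+β;
                   p*q+β, p*q, q^2+β, q^2;
                   p*q, p*q+β, q^2, q^2+β])
    (νZ : Matrix (Fin 4) (Fin 3) ℝ)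
    (hνZ : νZ = !![Real.sqrt (p^2+β), 0, 0;
                   p^2 / Real.sqrt (p^2+β), Real.sqrt (β*(2*p^2+β)/(p^2+β)), 0;
                   (p*q+β) / Real.sqrt (p^2+β), Real.sqrt (β*p^2*(q-p)^2/((p^2+β)*(2*p^2+β))),
                     Real.sqrt (β*(q-p)^2/(2*p^2+β));
                   p*q / Real.sqrt (p^2+β), Real.sqrt (β*(p^2+p*q+β)^2/((p^2+β)*(2*p^2+β))),
                     Real.sqrt (β*(q-p)^2/(2*p^2+β))]) :
    BZ = νZ * νZ.transpose := by
  have hA : (0:ℝ) < p^2+β := by positivity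
  have hB : (0:ℝ) < 2*p^2+β := by positivity
  have hqp : (0:ℝ) < q - p := by linarith
  have hC : (0:ℝ) < p^2+p*q+β := by nlinarith [mul_pos hp (hp.trans hpq)]
  -- normalize the sqrt expressions
  have n1 : Real.sqrt (β*(2*p^2+β)/(p^2+β))
      = Real.sqrt β * Real.sqrt (2*p^2+β) / Real.sqrt (p^2+β) := by
    rw [Real.sqrt_div (by positivity), Real.sqrt_mul hβ.le]
  have n2 : Real.sqrt (β*p^2*(q-p)^2/((p^2+β)*(2*p^2+β)))
      = Real.sqrt β * (p*(q-p)) / (Real.sqrt (p^2+β) * Real.sqrt (2*p^2+β)) := by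
    rw [Real.sqrt_div (by positivity), Real.sqrt_mul (by positivity),
      Real.sqrt_mul hβ.le, Real.sqrt_mul hA.le, Real.sqrt_sq hp.le, Real.sqrt_sq hqp.le]
    ring
  have n3 : Real.sqrt (β*(p^2+p*q+β)^2/((p^2+β)*(2*p^2+β)))
      = Real.sqrt β * (p^2+p*q+β) / (Real.sqrt (p^2+β) * Real.sqrt (2*p^2+β)) := by
    rw [Real.sqrt_div (by positivity), Real.sqrt_mul hβ.le,
      Real.sqrt_mul hA.le, Real.sqrt_sq hC.le]
  have n4 : Real.sqrt (β*(q-p)^2/(2*p^2+β))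
      = Real.sqrt β * (q-p) / Real.sqrt (2*p^2+β) := by
    rw [Real.sqrt_div (by positivity), Real.sqrt_mul hβ.le, Real.sqrt_sq hqp.le]
  rw [n1, n2, n3, n4] at hνZ
  subst hBZ hνZ
  set a := Real.sqrt (p^2+β) with ha
  set b := Real.sqrt (2*p^2+β) with hb
  set c := Real.sqrt β with hc
  have ha2 : a * a = p^2+β := Real.mul_self_sqrt hA.le
  have hb2 : b * b = 2*p^2+β := Real.mul_self_sqrt hB.le
  have hc2 : c * c = β := Real.mul_self_sqrt hβ.le
  have ha0 : a ≠ 0 := by rw [ha]; positivity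
  have hb0 : b ≠ 0 := by rw [hb]; positivity
  have hab : (a*b)*(a*b) = (p^2+β)*(2*p^2+β) := by
    calc (a*b)*(a*b) = (a*a)*(b*b) := by ring
    _ = _ := by rw [ha2, hb2]
  have hac : (a*c)*(a*c) = (p^2+β)*β := by
    calc (a*c)*(a*c) = (a*a)*(c*c) := by ring
    _ = _ := by rw [ha2, hc2]
  have hbc : (b*c)*(b*c) = (2*p^2+β)*β := by
    calc (b*c)*(b*c) = (b*b)*(c*c) := by ring
    _ = _ := by rw [hb2, hc2]
  have habc : (a*b*c)*(a*b*c) = (p^2+β)*((2*p^2+β)*β) := by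
    calc (a*b*c)*(a*b*c) = (a*a)*((b*b)*(c*c)) := by ring
    _ = _ := by rw [ha2, hb2, hc2]
  have pa2 : a^2 = p^2+β := by rw [sq]; exact ha2
  have pb2 : b^2 = 2*p^2+β := by rw [sq]; exact hb2
  have pc2 : c^2 = β := by rw [sq]; exact hc2
  have pa3 : a^3 = (p^2+β)*a := by rw [show a^3 = a^2*a by ring, pa2]
  have pb3 : b^3 = (2*p^2+β)*b := by rw [show b^3 = b^2*b by ring, pb2]
  have pc3 : c^3 = β*c := by rw [show c^3 = c^2*c by ring, pc2]
  have pa4 : a^4 = (p^2+β)^2 := by rw [show a^4 = (a^2)^2 by ring, pa2]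
  have pb4 : b^4 = (2*p^2+β)^2 := by rw [show b^4 = (b^2)^2 by ring, pb2]
  have pc4 : c^4 = β^2 := by rw [show c^4 = (c^2)^2 by ring, pc2]
  ext i j
  fin_cases i <;> fin_cases j <;>
    simp [Matrix.mul_apply, Fin.sum_univ_three, Matrix.transpose_apply, Matrix.vecHead,
      Matrix.vecTail] <;>
    (try field_simp) <;>
    ring_nf <;>
    simp only [pa4, pb4, pc4, pa3, pb3, pc3, pa2, pb2, pc2] <;>
    ring_nf <;>
    (try simp only [pa4, pb4, pc4, pa3, pb3, pc3, pa2, pb2, pc2]) <;>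
    (try ring)
end

section
/- For the two-block rank one model with π₁ + π₂ = 1, π₁, π₂ > 0, and 0 < p < q < 1, define σ_p² = (π₁p⁴(1−p²)+π₂pq³(1−pq))/(π₁p²+π₂q²)² and σ_q² = (π₁p³q(1−pq)+π₂q⁴(1−q²))/(π₁p²+π₂q²)². Then with π₁ = π₂ = 1/2, sup_{t∈(0,1)} t(1−t)(p−q)²/(tσ_p²+(1−t)σ_q²) = (p−q)²(p²+q²)²/(2(√(p²φ_p+q²φ_{pq}) + √(q²φ_q+p²φ_{pq}))²), where φ_p = p²(1−p²), φ_q = q²(1−q²), φ_{pq} = pq(1−pq). -/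
lemma sup_ratio (c A B : ℝ) (hc : 0 < c) (hA : 0 < A) (hB : 0 < B) :
    sSup {y : ℝ | ∃ t ∈ Set.Ioo (0 : ℝ) 1, y = t * (1 - t) * c / (t * A + (1 - t) * B)} =
      c / (Real.sqrt A + Real.sqrt B) ^ 2 := by
  set a := Real.sqrt A with ha'
  set b := Real.sqrt B with hb'
  have ha : 0 < a := Real.sqrt_pos.mpr hA
  have hb : 0 < b := Real.sqrt_pos.mpr hB
  have haA : a ^ 2 = A := Real.sq_sqrt hA.le
  have hbB : b ^ 2 = B := Real.sq_sqrt hB.le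
  have hab : 0 < a + b := by linarith
  have hub : ∀ y ∈ {y : ℝ | ∃ t ∈ Set.Ioo (0 : ℝ) 1,
      y = t * (1 - t) * c / (t * A + (1 - t) * B)}, y ≤ c / (a + b) ^ 2 := by
    rintro y ⟨t, ⟨ht0, ht1⟩, rfl⟩
    have hden : 0 < t * A + (1 - t) * B := by nlinarith
    rw [div_le_div_iff₀ hden (by positivity), ← haA, ← hbB]
    nlinarith [mul_nonneg hc.le (sq_nonneg (t * a - (1 - t) * b))]
  have hmem : c / (a + b) ^ 2 ∈ {y : ℝ | ∃ t ∈ Set.Ioo (0 : ℝ) 1,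
      y = t * (1 - t) * c / (t * A + (1 - t) * B)} := by
    refine ⟨b / (a + b), ⟨by positivity, ?_⟩, ?_⟩
    · rw [div_lt_one hab]; linarith
    · rw [← haA, ← hbB]
      have h1 : a * b + a ^ 2 ≠ 0 := by positivity
      field_simp
      ring_nf
      rw [← add_mul, mul_inv_cancel₀ h1]
  apply le_antisymm
  · exact csSup_le ⟨_, hmem⟩ hub
  · exact le_csSup ⟨_, hub⟩ hmem

set_option maxHeartbeats 1000000 in
theorem stmt_16 (p q : ℝ) (hp : 0 < p) (hpq : p < q) (hq : q < 1)
    (σp2 σq2 φp φq φpq : ℝ)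
    (hσp : σp2 = ((1/2) * p^4 * (1 - p^2) + (1/2) * p * q^3 * (1 - p*q)) /
      ((1/2) * p^2 + (1/2) * q^2) ^ 2)
    (hσq : σq2 = ((1/2) * p^3 * q * (1 - p*q) + (1/2) * q^4 * (1 - q^2)) /
      ((1/2) * p^2 + (1/2) * q^2) ^ 2)
    (hφp : φp = p^2 * (1 - p^2)) (hφq : φq = q^2 * (1 - q^2)) (hφpq : φpq = p*q*(1 - p*q)) :
    sSup {y : ℝ | ∃ t ∈ Set.Ioo (0 : ℝ) 1,
        y = t * (1 - t) * (p - q) ^ 2 / (t * σp2 + (1 - t) * σq2)} =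
      (p - q) ^ 2 * (p ^ 2 + q ^ 2) ^ 2 /
        (2 * (Real.sqrt (p^2 * φp + q^2 * φpq) + Real.sqrt (q^2 * φq + p^2 * φpq)) ^ 2) := by
  have hq0 : 0 < q := hp.trans hpq
  have hp1 : p < 1 := hpq.trans hq
  have hpq1 : p * q < 1 := by nlinarith
  set X := p^2 * φp + q^2 * φpq with hX'
  set Y := q^2 * φq + p^2 * φpq with hY'
  have h1p : (0:ℝ) < 1 - p^2 := by nlinarith
  have h1q : (0:ℝ) < 1 - q^2 := by nlinarith
  have h1pq : (0:ℝ) < 1 - p*q := by nlinarith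
  have hX : 0 < X := by
    rw [hX', hφp, hφpq]
    have := mul_pos (mul_pos (pow_pos hp 2) (pow_pos hp 2)) h1p
    have := mul_pos (mul_pos (pow_pos hq0 2) (mul_pos hp hq0)) h1pq
    nlinarith
  have hY : 0 < Y := by
    rw [hY', hφq, hφpq]
    have := mul_pos (mul_pos (pow_pos hq0 2) (pow_pos hq0 2)) h1q
    have := mul_pos (mul_pos (pow_pos hp 2) (mul_pos hp hq0)) h1pq
    nlinarith
  set k : ℝ := 1 / (2 * ((1/2) * p^2 + (1/2) * q^2) ^ 2) with hk'
  have hk : 0 < k := by positivity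
  have hσpX : σp2 = X * k := by
    rw [hσp, hX', hφp, hφpq, hk']; field_simp
  have hσqY : σq2 = Y * k := by
    rw [hσq, hY', hφq, hφpq, hk']; field_simp; ring
  have hσp0 : 0 < σp2 := by rw [hσpX]; positivity
  have hσq0 : 0 < σq2 := by rw [hσqY]; positivity
  have hc : (0:ℝ) < (p - q)^2 := by nlinarith
  rw [sup_ratio _ _ _ hc hσp0 hσq0]
  have hsp : Real.sqrt σp2 = Real.sqrt X * Real.sqrt k := by
    rw [hσpX, Real.sqrt_mul hX.le]
  have hsq : Real.sqrt σq2 = Real.sqrt Y * Real.sqrt k := by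
    rw [hσqY, Real.sqrt_mul hY.le]
  rw [hsp, hsq]
  have hsum : Real.sqrt X * Real.sqrt k + Real.sqrt Y * Real.sqrt k
      = (Real.sqrt X + Real.sqrt Y) * Real.sqrt k := by ring
  rw [hsum, mul_pow, Real.sq_sqrt hk.le]
  set u : ℝ := Real.sqrt X + Real.sqrt Y with hu'
  have hu : 0 < u := by
    have := Real.sqrt_pos.mpr hX; have := Real.sqrt_pos.mpr hY
    rw [hu']; linarith
  have h2 : (0:ℝ) < p^2 + q^2 := by positivity
  have hkval : k = 2 / (p^2 + q^2)^2 := by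
    rw [hk']; field_simp
  clear_value X Y k u
  rw [hkval]
  rw [div_eq_div_iff (by positivity) (by positivity)]
  field_simp
end
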